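/- In a uniquely geodesic metric space, if H is a closed half-plane (the closure of a connected component of the complement of a bi-infinite geodesic line whose boundary is that geodesic), then H is convex: for any x, y ∈ H, the geodesic segment [x,y] is contained in H. -/

import Mathlib

open Set

/-- `γ` is a geodesic segment from `x` to `y`, parametrized by arclength on
`[0, dist x y]`. -/
def IsGeodesicSegment {X : Type*} [MetricSpace X] (γ : ℝ → X) (x y : X) : Prop :=
  γ 0 = x ∧ γ (dist x y) = y ∧
    ∀ s ∈ Icc (0 : ℝ) (dist x y), ∀ t ∈ Icc (0 : ℝ) (dist x y),
      dist (γ s) (γ t) = |s - t|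

/-- `L` is a bi-infinite geodesic line, parametrized by arclength on `ℝ`. -/
def IsGeodesicLine {X : Type*} [MetricSpace X] (L : ℝ → X) : Prop :=
  ∀ s t : ℝ, dist (L s) (L t) = |s - t|

theorem closed_halfplane_convex {X : Type*} [MetricSpace X]
    (hexists : ∀ x y : X, ∃ γ : ℝ → X, IsGeodesicSegment γ x y)
    (huniq : ∀ (x y : X) (γ₁ γ₂ : ℝ → X), IsGeodesicSegment γ₁ x y →
      IsGeodesicSegment γ₂ x y → ∀ t ∈ Icc (0 : ℝ) (dist x y), γ₁ t = γ₂ t)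
    (L : ℝ → X) (hL : IsGeodesicLine L)
    (p : X) (hp : p ∉ range L)
    (H : Set X) (hH : H = connectedComponentIn (range L)ᶜ p ∪ range L) :
    ∀ x ∈ H, ∀ y ∈ H, ∀ γ : ℝ → X, IsGeodesicSegment γ x y →
      ∀ t ∈ Icc (0 : ℝ) (dist x y), γ t ∈ H := by
  intro x hx y hy γ hγ t ht
  obtain ⟨hγ0, hγd, hγiso⟩ := hγ
  set d := dist x y with hd
  -- Key: if γ hits L at some a ≤ t and some b ≥ t, then γ t ∈ range L.
  have key : ∀ a ∈ Icc (0:ℝ) d, ∀ b ∈ Icc (0:ℝ) d, a ≤ t → t ≤ b →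
      γ a ∈ range L → γ b ∈ range L → γ t ∈ range L := by
    rintro a ha b hb hat htb ⟨s, hs⟩ ⟨u, hu⟩
    rcases eq_or_lt_of_le (hat.trans htb) with hab | hab
    · have hta : t = a := le_antisymm (hab ▸ htb) hat
      exact ⟨s, by rw [hta, hs]⟩
    · have hdab : dist (γ a) (γ b) = b - a := by
        rw [hγiso a ha b hb, abs_of_nonpos (by linarith)]; ring
      have hsu : |s - u| = b - a := by rw [← hL s u, hs, hu, hdab]
      have hba : (0:ℝ) < b - a := by linarith
      set c := (u - s) / (b - a) with hc
      have hcabs : |c| = 1 := by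
        rw [hc, abs_div, abs_of_pos hba, ← abs_neg, neg_sub, hsu, div_self hba.ne']
      have hdsu : dist (L s) (L u) = b - a := by rw [hL s u, hsu]
      have hδ : IsGeodesicSegment (fun r => γ (a + r)) (L s) (L u) := by
        refine ⟨by simp [hs], ?_, ?_⟩
        · rw [hdsu]; show γ (a + (b - a)) = L u; rw [add_sub_cancel, hu]
        · intro r hr r' hr'
          rw [hdsu] at hr hr'
          rw [hγiso (a + r) ⟨by linarith [hr.1, ha.1], by linarith [hr.2, hb.2]⟩
              (a + r') ⟨by linarith [hr'.1, ha.1], by linarith [hr'.2, hb.2]⟩]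
          congr 1; ring
      have hη : IsGeodesicSegment (fun r => L (s + c * r)) (L s) (L u) := by
        refine ⟨by simp, ?_, ?_⟩
        · rw [hdsu]
          have h2 : s + c * (b - a) = u := by rw [hc]; field_simp; ring
          show L (s + c * (b - a)) = L u
          rw [h2]
        · intro r hr r' hr'
          rw [hL]
          have : s + c * r - (s + c * r') = c * (r - r') := by ring
          rw [this, abs_mul, hcabs, one_mul]
      have := huniq (L s) (L u) _ _ hδ hη (t - a) ⟨by linarith, by rw [hdsu]; linarith⟩
      simp only [add_sub_cancel] at this
      exact ⟨s + c * (t - a), this.symm⟩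
  by_cases hLt : γ t ∈ range L
  · rw [hH]; exact Or.inr hLt
  have hcont : ContinuousOn γ (Icc 0 d) := by
    apply LipschitzOnWith.continuousOn (K := 1)
    intro s hs u hu
    rw [edist_dist, edist_dist, hγiso s hs u hu, Real.dist_eq, ENNReal.coe_one, one_mul]
  have side : ∀ z : X, z ∈ H → ∀ I : Set ℝ, I ⊆ Icc 0 d → IsPreconnected I →
      t ∈ I → (∃ r ∈ I, γ r = z) → (∀ r ∈ I, γ r ∉ range L) → γ t ∈ H := by
    rintro z hz I hIsub hIconn htI ⟨r, hrI, hrz⟩ hmiss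
    have himg : γ '' I ⊆ (range L)ᶜ := by rintro _ ⟨w, hw, rfl⟩; exact hmiss w hw
    have hzC : z ∈ connectedComponentIn (range L)ᶜ p := by
      rcases hH ▸ hz with h | h
      · exact h
      · exact absurd h (hrz ▸ himg ⟨r, hrI, rfl⟩)
    have hconn : IsPreconnected (γ '' I) := hIconn.image γ (hcont.mono hIsub)
    have hsub : γ '' I ⊆ connectedComponentIn (range L)ᶜ z :=
      hconn.subset_connectedComponentIn ⟨r, hrI, hrz⟩ himg
    have : γ t ∈ connectedComponentIn (range L)ᶜ z := hsub ⟨t, htI, rfl⟩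
    rw [hH]
    exact Or.inl ((connectedComponentIn_eq hzC) ▸ this)
  by_cases hA : ∃ a ∈ Icc 0 t, γ a ∈ range L
  · by_cases hB : ∃ b ∈ Icc t d, γ b ∈ range L
    · obtain ⟨a, ha, hga⟩ := hA
      obtain ⟨b, hb, hgb⟩ := hB
      exact absurd (key a ⟨ha.1, ha.2.trans ht.2⟩ b ⟨ht.1.trans hb.1, hb.2⟩ ha.2 hb.1 hga hgb) hLt
    · push_neg at hB
      exact side y hy (Icc t d) (Icc_subset_Icc ht.1 le_rfl) isPreconnected_Icc
        ⟨le_rfl, ht.2⟩ ⟨d, ⟨ht.2, le_rfl⟩, hγd⟩ hB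
  · push_neg at hA
    exact side x hx (Icc 0 t) (Icc_subset_Icc le_rfl ht.2) isPreconnected_Icc
      ⟨ht.1, le_rfl⟩ ⟨0, ⟨le_rfl, ht.1⟩, hγ0⟩ hA
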